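/- For any coarse equivalence f : (X, d_X) → (Y, d_Y) between extended metric spaces, there exists a metric d' on Y such that the map f' : (X, d_X) → (Y, d'), equal to f as a function, is a quasi-isometry, and the identity map (Y, d') → (Y, d_Y) is a coarse equivalence. -/

import Mathlib

open scoped ENNReal NNReal
open Filter

namespace CoarseStmt

variable {α β : Type*}

/-- Two maps into a space with extended distance `dB` are close if pointwise
distances of images are uniformly bounded by some finite constant. -/
def Close (dB : β → β → ℝ≥0∞) (f g : α → β) : Prop :=
  ∃ κ : ℝ≥0, ∀ x, dB (f x) (g x) ≤ κ

/-- `ρ` is an upper control for `f`: increasing, proper, and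
`dB (f x) (f x') ≤ ρ (dA x x')` whenever `dA x x'` is finite. -/
def IsUpperControl (dA : α → α → ℝ≥0∞) (dB : β → β → ℝ≥0∞) (f : α → β)
    (ρ : ℝ≥0 → ℝ≥0) : Prop :=
  Monotone ρ ∧ Tendsto ρ atTop atTop ∧
    ∀ x x', dA x x' ≠ ⊤ → dB (f x) (f x') ≤ ρ (dA x x').toNNReal

/-- A map is controlled if it admits an upper control. -/
def Controlled (dA : α → α → ℝ≥0∞) (dB : β → β → ℝ≥0∞) (f : α → β) : Prop :=
  ∃ ρ, IsUpperControl dA dB f ρ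

/-- `θ` is a lower control for `f`: increasing, proper,
`θ (dA x x') ≤ dB (f x) (f x')`, with the convention that infinite distances
in the domain map to infinite distances in the codomain. -/
def IsLowerControl (dA : α → α → ℝ≥0∞) (dB : β → β → ℝ≥0∞) (f : α → β)
    (θ : ℝ≥0 → ℝ≥0) : Prop :=
  Monotone θ ∧ Tendsto θ atTop atTop ∧
    (∀ x x', dA x x' = ⊤ → dB (f x) (f x') = ⊤) ∧
    (∀ x x', dA x x' ≠ ⊤ → (θ (dA x x').toNNReal : ℝ≥0∞) ≤ dB (f x) (f x'))

def HasLowerControl (dA : α → α → ℝ≥0∞) (dB : β → β → ℝ≥0∞) (f : α → β) : Prop :=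
  ∃ θ, IsLowerControl dA dB f θ

/-- Some `r`-neighbourhood of the image is everything. -/
def CoarselySurjective (dB : β → β → ℝ≥0∞) (f : α → β) : Prop :=
  ∃ r : ℝ≥0, ∀ y, ∃ x, dB (f x) y ≤ r

/-- `f` admits an affine upper control. -/
def CoarselyLipschitz (dA : α → α → ℝ≥0∞) (dB : β → β → ℝ≥0∞) (f : α → β) : Prop :=
  ∃ a b : ℝ≥0, ∀ x x', dB (f x) (f x') ≤ (a : ℝ≥0∞) * dA x x' + b

/-- A coarse equivalence: controlled, coarsely surjective, with a lower control. -/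
def CoarseEquivalence (dA : α → α → ℝ≥0∞) (dB : β → β → ℝ≥0∞) (f : α → β) : Prop :=
  Controlled dA dB f ∧ CoarselySurjective dB f ∧ HasLowerControl dA dB f

/-- A quasi-isometry: affine upper and lower controls, coarsely surjective. -/
def QuasiIsometry (dA : α → α → ℝ≥0∞) (dB : β → β → ℝ≥0∞) (f : α → β) : Prop :=
  CoarselyLipschitz dA dB f ∧
    (∃ a b : ℝ≥0, ∀ x x', dA x x' ≤ (a : ℝ≥0∞) * dB (f x) (f x') + b) ∧
    CoarselySurjective dB f

/-- Weighted path (pseudo)metric associated to an edge-weight function `E`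
(`E u v = ⊤` means no edge): the infimum of total weights over finite chains. -/
noncomputable def pathDist {V : Type*} (E : V → V → ℝ≥0∞) (u v : V) : ℝ≥0∞ :=
  ⨅ (n : ℕ) (p : ℕ → V) (_ : p 0 = u) (_ : p n = v),
    ∑ i ∈ Finset.range n, E (p i) (p (i + 1))

end CoarseStmt

namespace CoarseStmt

/-- `d` is an extended metric on its underlying type. -/
def IsEMetricFn {Y : Type*} (d : Y → Y → ℝ≥0∞) : Prop :=
  (∀ y, d y y = 0) ∧ (∀ y y', d y y' = d y' y) ∧
    (∀ a b c, d a c ≤ d a b + d b c) ∧ (∀ y y', d y y' = 0 → y = y')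

set_option maxHeartbeats 1000000 in
/-- Any coarse equivalence factors as a quasi-isometry onto a remetrised
codomain followed by the identity, which is a coarse equivalence. -/
theorem coarseEquivalence_factors_through_quasiIsometry
    {X Y : Type*} [EMetricSpace X] [EMetricSpace Y] (f : X → Y)
    (hf : CoarseEquivalence (fun x x' => edist x x') (fun y y' => edist y y') f) :
    ∃ d' : Y → Y → ℝ≥0∞, IsEMetricFn d' ∧
      QuasiIsometry (fun x x' => edist x x') d' f ∧
      CoarseEquivalence d' (fun y y' => edist y y') (id : Y → Y) := by
  classical
  obtain ⟨⟨ρ, hρmono, hρtop, hρ⟩, ⟨r, hr⟩, ⟨θ, hθmono, hθtop, hθinf, hθ⟩⟩ := hf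
  choose g hg using hr
  obtain ⟨s, hs⟩ : ∃ s : ℝ≥0, r < θ s := (hθtop.eventually_gt_atTop r).exists
  -- g ∘ f is uniformly close to the identity on X
  have key : ∀ x : X, edist (g (f x)) x ≤ (s : ℝ≥0∞) := by
    intro x
    have hfin : edist (g (f x)) x ≠ ⊤ := by
      intro h
      have h1 := hθinf (g (f x)) x h
      have h2 := hg (f x)
      rw [h1] at h2
      simp at h2
    have h3 : (θ ((edist (g (f x)) x).toNNReal) : ℝ≥0∞) ≤ r :=
      le_trans (hθ (g (f x)) x hfin) (hg (f x))
    have h4 : θ ((edist (g (f x)) x).toNNReal) ≤ r := by exact_mod_cast h3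
    have h5 : (edist (g (f x)) x).toNNReal ≤ s := by
      by_contra h
      push_neg at h
      exact absurd (le_trans (hθmono h.le) h4) (not_le.mpr hs)
    rw [← ENNReal.coe_toNNReal hfin]
    exact_mod_cast h5
  set d' : Y → Y → ℝ≥0∞ :=
    fun y y' => edist (g y) (g y') + (if y = y' then 0 else 1) with hd'
  have hind : ∀ y y' : Y, (if y = y' then (0:ℝ≥0∞) else 1) ≤ 1 := by
    intro y y'; split <;> simp
  have hself : ∀ y y', edist (g y) (g y') ≤ d' y y' := by
    intro y y'; exact self_le_add_right _ _
  refine ⟨d', ⟨?_, ?_, ?_, ?_⟩, ⟨⟨1, 2*s+1, ?_⟩, ⟨1, 2*s, ?_⟩, ⟨s+1, ?_⟩⟩,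
    ⟨fun t => ρ t + 2*r, fun a b h => add_le_add_left (hρmono h) _, ?_, ?_⟩,
    ⟨0, fun y => ⟨y, by simp⟩⟩,
    ⟨fun t => θ (t - 1) - 2*r,
      fun a b h => tsub_le_tsub_right (hθmono (tsub_le_tsub_right h 1)) _, ?_, ?_, ?_⟩⟩
  · intro y; simp [hd']
  · intro y y'
    by_cases h : y = y'
    · simp [hd', h]
    · simp [hd', h, Ne.symm h, edist_comm]
  · intro a b c
    have h1 : edist (g a) (g c) ≤ edist (g a) (g b) + edist (g b) (g c) :=
      edist_triangle _ _ _
    have h2 : (if a = c then (0:ℝ≥0∞) else 1) ≤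
        (if a = b then 0 else 1) + (if b = c then 0 else 1) := by
      by_cases hab : a = b <;> by_cases hbc : b = c <;> by_cases hac : a = c <;> simp_all
    calc d' a c = edist (g a) (g c) + (if a = c then 0 else 1) := rfl
      _ ≤ (edist (g a) (g b) + edist (g b) (g c)) +
          ((if a = b then 0 else 1) + (if b = c then 0 else 1)) := add_le_add h1 h2
      _ = d' a b + d' b c := by simp only [hd']; ring
  · intro y y' h0
    by_contra hne
    have : d' y y' = edist (g y) (g y') + 1 := by simp [hd', hne]
    rw [this] at h0
    simp at h0
  -- coarsely Lipschitz
  · intro x x'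
    have t2 : edist x' (g (f x')) ≤ (s:ℝ≥0∞) := by rw [edist_comm]; exact key x'
    have tri : edist (g (f x)) (g (f x')) ≤ edist x x' + 2*s := by
      calc edist (g (f x)) (g (f x'))
          ≤ edist (g (f x)) x + edist x (g (f x')) := edist_triangle _ _ _
        _ ≤ edist (g (f x)) x + (edist x x' + edist x' (g (f x'))) := by
            gcongr; exact edist_triangle _ _ _
        _ ≤ s + (edist x x' + s) := add_le_add (key x) (add_le_add_right t2 _)
        _ = edist x x' + 2*s := by ring
    calc d' (f x) (f x') ≤ (edist x x' + 2*s) + 1 := add_le_add tri (hind _ _)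
      _ = (1:ℝ≥0∞) * edist x x' + ((2*s+1 : ℝ≥0) : ℝ≥0∞) := by push_cast; ring
  -- lower affine bound
  · intro x x'
    have t2 : edist (g (f x')) x' ≤ (s:ℝ≥0∞) := key x'
    have t1 : edist x (g (f x)) ≤ (s:ℝ≥0∞) := by rw [edist_comm]; exact key x
    calc edist x x'
        ≤ edist x (g (f x)) + edist (g (f x)) (g (f x')) + edist (g (f x')) x' :=
          edist_triangle4 _ _ _ _
      _ ≤ s + d' (f x) (f x') + s := add_le_add (add_le_add t1 (hself _ _)) t2
      _ = (1:ℝ≥0∞) * d' (f x) (f x') + ((2*s : ℝ≥0) : ℝ≥0∞) := by push_cast; ring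
  -- coarse surjectivity of f for d'
  · intro y
    refine ⟨g y, ?_⟩
    calc d' (f (g y)) y ≤ (s:ℝ≥0∞) + 1 := add_le_add (key (g y)) (hind _ _)
      _ = ((s + 1 : ℝ≥0) : ℝ≥0∞) := by push_cast; ring
  -- ρ' proper
  · exact tendsto_atTop_mono (fun t => le_self_add) hρtop
  -- upper control for id
  · intro y y' hfin
    have hE : edist (g y) (g y') ≠ ⊤ := fun h =>
      hfin (top_le_iff.mp (h ▸ hself y y'))
    have h1 : edist (f (g y)) (f (g y')) ≤ ρ ((edist (g y) (g y')).toNNReal) :=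
      hρ _ _ hE
    have hmono2 : (edist (g y) (g y')).toNNReal ≤ (d' y y').toNNReal :=
      ENNReal.toNNReal_mono hfin (hself y y')
    have h3 : edist y (f (g y)) ≤ (r:ℝ≥0∞) := by rw [edist_comm]; exact hg y
    calc edist (id y) (id y')
        ≤ edist y (f (g y)) + edist (f (g y)) (f (g y')) + edist (f (g y')) y' :=
          edist_triangle4 _ _ _ _
      _ ≤ r + (ρ ((d' y y').toNNReal) : ℝ≥0∞) + r :=
          add_le_add (add_le_add h3
            (h1.trans (ENNReal.coe_le_coe.mpr (hρmono hmono2)))) (hg y')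
      _ = ((ρ ((d' y y').toNNReal) + 2*r : ℝ≥0) : ℝ≥0∞) := by push_cast; ring
  -- θ' proper
  · rw [tendsto_atTop_atTop]
    intro b
    obtain ⟨N, hN⟩ := tendsto_atTop_atTop.mp hθtop (b + 2*r)
    refine ⟨N + 1, fun a ha => ?_⟩
    have h1 : N ≤ a - 1 := le_tsub_of_add_le_right ha
    exact le_tsub_of_add_le_right (hN _ h1)
  -- infinite distances
  · intro y y' htop
    have hE : edist (g y) (g y') = ⊤ := by
      by_contra h
      exact (ENNReal.add_ne_top.mpr ⟨h, by split <;> simp⟩) htop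
    have h1 := hθinf (g y) (g y') hE
    have h4 : edist (f (g y)) (f (g y')) ≤ r + edist y y' + r := by
      calc edist (f (g y)) (f (g y'))
          ≤ edist (f (g y)) y + edist y y' + edist y' (f (g y')) :=
            edist_triangle4 _ _ _ _
        _ ≤ r + edist y y' + r := by
            gcongr
            · exact hg y
            · rw [edist_comm]; exact hg y'
    have h1' : edist (f (g y)) (f (g y')) = ⊤ := h1
    rw [h1'] at h4
    show edist (id y) (id y') = ⊤
    simp only [id_eq]
    by_contra hne
    simp [top_le_iff, ENNReal.add_eq_top, hne] at h4
  -- lower control for id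
  · intro y y' hfin
    have hE : edist (g y) (g y') ≠ ⊤ := fun h =>
      hfin (top_le_iff.mp (h ▸ hself y y'))
    have ht : (d' y y').toNNReal - 1 ≤ (edist (g y) (g y')).toNNReal := by
      have hle : d' y y' ≤ edist (g y) (g y') + 1 := add_le_add_right (hind _ _) _
      have h2 : (d' y y').toNNReal ≤ (edist (g y) (g y') + 1).toNNReal :=
        ENNReal.toNNReal_mono (by simp [ENNReal.add_ne_top, hE]) hle
      have hadd : (edist (g y) (g y') + 1).toNNReal
          = (edist (g y) (g y')).toNNReal + 1 := by
        rw [ENNReal.toNNReal_add hE ENNReal.one_ne_top]; simp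
      exact tsub_le_iff_right.mpr (h2.trans_eq hadd)
    have h1 : (θ ((d' y y').toNNReal - 1) : ℝ≥0∞) ≤ edist (f (g y)) (f (g y')) :=
      le_trans (by exact_mod_cast hθmono ht) (hθ _ _ hE)
    have h2 : edist (f (g y)) (f (g y')) ≤ edist y y' + 2*r := by
      calc edist (f (g y)) (f (g y'))
          ≤ edist (f (g y)) y + edist y y' + edist y' (f (g y')) :=
            edist_triangle4 _ _ _ _
        _ ≤ r + edist y y' + r := by
            gcongr
            · exact hg y
            · rw [edist_comm]; exact hg y'
        _ = edist y y' + 2*r := by ring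
    rw [ENNReal.coe_sub]
    refine tsub_le_iff_right.mpr ?_
    calc (θ ((d' y y').toNNReal - 1) : ℝ≥0∞) ≤ edist y y' + 2*r := h1.trans h2
      _ = edist (id y) (id y') + ((2*r : ℝ≥0) : ℝ≥0∞) := by push_cast; simp


end CoarseStmt
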